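/- A Boolean relation R ⊆ {0,1}^n is bijunctive (definable by a 2-CNF formula) if and only if R is closed under the coordinate-wise ternary majority operation MAJ(x,y,z) = (x∨y)∧(y∨z)∧(z∨x). -/
import Mathlib

def SatClause {n : ℕ} (a : Fin n → Bool) (c : List (Fin n × Bool)) : Prop :=
  ∃ l ∈ c, (if l.2 then a l.1 else !(a l.1)) = true

/-- The ternary Boolean majority operation. -/
def maj (x y z : Bool) : Bool := (x || y) && (y || z) && (z || x)

private lemma maj_pigeon : ∀ x1 x2 y1 y2 z1 z2 : Bool, (x1 || x2) = true → (y1 || y2) = true →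
    (z1 || z2) = true → maj x1 y1 z1 = true ∨ maj x2 y2 z2 = true := by decide

private lemma maj_not' : ∀ x y z : Bool, maj x y z = (!(maj (!x) (!y) (!z))) := by decide

private lemma maj_not : ∀ x y z : Bool, (!(maj x y z)) = maj (!x) (!y) (!z) := by decide

private lemma maj_vxx : ∀ x v : Bool, maj x v v = v := by decide
private lemma maj_xvx : ∀ x v : Bool, maj v x v = v := by decide
private lemma maj_xxv : ∀ x v : Bool, maj v v x = v := by decide

/-- all literals on `Fin n` -/
private def lits (n : ℕ) : List (Fin n × Bool) :=
  (List.finRange n).flatMap (fun i => [(i, true), (i, false)])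

private lemma mem_lits {n : ℕ} (l : Fin n × Bool) : l ∈ lits n :=
  List.mem_flatMap.mpr ⟨l.1, List.mem_finRange _, by rcases l with ⟨i, b⟩; cases b <;> simp⟩

/-- candidate clauses of length ≤ 2 -/
private def cands (n : ℕ) : List (List (Fin n × Bool)) :=
  [] :: ((lits n).map (fun l => [l]) ++ (lits n).flatMap (fun l1 => (lits n).map (fun l2 => [l1, l2])))

private lemma cands_len {n : ℕ} {c : List (Fin n × Bool)} (h : c ∈ cands n) : c.length ≤ 2 := by
  rcases List.mem_cons.mp h with rfl | h
  · simp
  rcases List.mem_append.mp h with h | h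
  · obtain ⟨l, -, rfl⟩ := List.mem_map.mp h; simp
  · obtain ⟨l1, -, h⟩ := List.mem_flatMap.mp h
    obtain ⟨l2, -, rfl⟩ := List.mem_map.mp h; simp

private lemma pair_mem_cands {n : ℕ} (l1 l2 : Fin n × Bool) : [l1, l2] ∈ cands n :=
  List.mem_cons.mpr (Or.inr (List.mem_append.mpr (Or.inr (List.mem_flatMap.mpr
    ⟨l1, mem_lits l1, List.mem_map.mpr ⟨l2, mem_lits l2, rfl⟩⟩))))

private lemma nil_mem_cands {n : ℕ} : ([] : List (Fin n × Bool)) ∈ cands n := by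
  simp [cands]

theorem bijunctive_iff_closed_under_maj (n : ℕ) (R : Set (Fin n → Bool)) :
    (∃ φ : List (List (Fin n × Bool)),
        (∀ c ∈ φ, c.length ≤ 2) ∧
        R = {a | ∀ c ∈ φ, SatClause a c}) ↔
    (∀ a ∈ R, ∀ b ∈ R, ∀ c ∈ R, (fun i => maj (a i) (b i) (c i)) ∈ R) := by
  constructor
  · rintro ⟨φ, hlen, rfl⟩ a ha b hb c hc
    simp only [Set.mem_setOf_eq] at *
    intro cl hcl
    have Ha := ha cl hcl
    have Hb := hb cl hcl
    have Hc := hc cl hcl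
    match cl, hcl with
    | [], hcl => exact absurd Ha (by simp [SatClause])
    | [l0], hcl =>
      have Ha' : (if l0.2 then a l0.1 else !(a l0.1)) = true := by
        obtain ⟨l, hl, hv⟩ := Ha; simp at hl; rwa [hl] at hv
      have Hb' : (if l0.2 then b l0.1 else !(b l0.1)) = true := by
        obtain ⟨l, hl, hv⟩ := Hb; simp at hl; rwa [hl] at hv
      have Hc' : (if l0.2 then c l0.1 else !(c l0.1)) = true := by
        obtain ⟨l, hl, hv⟩ := Hc; simp at hl; rwa [hl] at hv
      refine ⟨l0, by simp, ?_⟩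
      rcases hl2 : l0.2 <;> simp [hl2] at Ha' Hb' Hc' ⊢ <;> simp [Ha', Hb', Hc', maj]
    | l1 :: l2 :: t, hcl =>
      have : t = [] := by
        have h2 := hlen _ hcl
        rw [List.length_cons, List.length_cons] at h2
        exact List.eq_nil_of_length_eq_zero (by omega)
      subst this
      have key : ∀ l : Fin n × Bool,
          (if l.2 then maj (a l.1) (b l.1) (c l.1) else !(maj (a l.1) (b l.1) (c l.1)))
            = maj (if l.2 then a l.1 else !(a l.1)) (if l.2 then b l.1 else !(b l.1))
                  (if l.2 then c l.1 else !(c l.1)) := by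
        intro l
        rcases l.2
        · rw [if_neg (by simp), if_neg (by simp), if_neg (by simp), if_neg (by simp)]
          exact maj_not _ _ _
        · simp
      have ext : ∀ x : Fin n → Bool, SatClause x [l1, l2] →
          ((if l1.2 then x l1.1 else !(x l1.1)) || (if l2.2 then x l2.1 else !(x l2.1))) = true := by
        rintro x ⟨l, hl, hv⟩
        simp at hl
        rcases hl with rfl | rfl <;> simp [hv]
      have := maj_pigeon _ _ _ _ _ _ (ext a Ha) (ext b Hb) (ext c Hc)
      rcases this with h | h
      · exact ⟨l1, by simp, by rw [key]; exact h⟩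
      · exact ⟨l2, by simp, by rw [key]; exact h⟩
  · intro hmaj
    classical
    set φ : List (List (Fin n × Bool)) :=
      (cands n).filter (fun c => decide (∀ b ∈ R, SatClause b c)) with hφ
    refine ⟨φ, ?_, ?_⟩
    · intro c hc
      exact cands_len (List.mem_filter.mp hc).1
    · ext a
      simp only [Set.mem_setOf_eq]
      constructor
      · intro ha c hc
        exact of_decide_eq_true (List.mem_filter.mp hc).2 a ha
      · intro ha
        by_cases hne : ∃ r, r ∈ R
        · -- pairwise agreement
          have hpair : ∀ i j : Fin n, ∃ b ∈ R, b i = a i ∧ b j = a j := by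
            intro i j
            by_contra h
            push_neg at h
            have hval : ∀ b ∈ R, SatClause b [(i, !(a i)), (j, !(a j))] := by
              intro b hbR
              by_cases hbi : b i = a i
              · have hbj := h b hbR hbi
                refine ⟨(j, !(a j)), by simp, ?_⟩
                rcases haj : a j <;> rcases hbj' : b j <;> simp_all
              · refine ⟨(i, !(a i)), by simp, ?_⟩
                rcases hai : a i <;> rcases hbi' : b i <;> simp_all
            have hmem : [(i, !(a i)), (j, !(a j))] ∈ φ :=
              List.mem_filter.mpr ⟨pair_mem_cands _ _, decide_eq_true hval⟩
            obtain ⟨l, hl, hlv⟩ := ha _ hmem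
            simp at hl
            rcases hl with rfl | rfl <;>
              [rcases hai : a i <;> simp_all; rcases haj : a j <;> simp_all]
          have key : ∀ S : Finset (Fin n), ∃ b ∈ R, ∀ i ∈ S, b i = a i := by
            intro S
            induction S using Finset.strongInductionOn with
            | _ S IH =>
              rcases S.eq_empty_or_nonempty with rfl | ⟨i, hi⟩
              · obtain ⟨r, hr⟩ := hne
                exact ⟨r, hr, by simp⟩
              · rcases (S.erase i).eq_empty_or_nonempty with he | ⟨j, hj⟩
                · obtain ⟨b, hbR, hbi, -⟩ := hpair i i
                  refine ⟨b, hbR, fun m hm => ?_⟩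
                  have : m = i := by
                    by_contra hmi
                    exact absurd (Finset.mem_erase.mpr ⟨hmi, hm⟩) (by simp [he])
                  rwa [this]
                · have hji : j ≠ i := (Finset.mem_erase.mp hj).1
                  have hjS : j ∈ S := (Finset.mem_erase.mp hj).2
                  rcases ((S.erase i).erase j).eq_empty_or_nonempty with he | ⟨k, hk⟩
                  · obtain ⟨b, hbR, hbi, hbj⟩ := hpair i j
                    refine ⟨b, hbR, fun m hm => ?_⟩
                    by_cases hmi : m = i
                    · rwa [hmi]
                    · have hm' : m ∈ S.erase i := Finset.mem_erase.mpr ⟨hmi, hm⟩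
                      have : m = j := by
                        by_contra hmj
                        exact absurd (Finset.mem_erase.mpr ⟨hmj, hm'⟩) (by simp [he])
                      rwa [this]
                  · have hkj : k ≠ j := (Finset.mem_erase.mp hk).1
                    have hk' : k ∈ S.erase i := (Finset.mem_erase.mp hk).2
                    have hki : k ≠ i := (Finset.mem_erase.mp hk').1
                    have hkS : k ∈ S := (Finset.mem_erase.mp hk').2
                    obtain ⟨b1, hb1R, hb1⟩ := IH (S.erase i) (Finset.erase_ssubset hi)
                    obtain ⟨b2, hb2R, hb2⟩ := IH (S.erase j) (Finset.erase_ssubset hjS)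
                    obtain ⟨b3, hb3R, hb3⟩ := IH (S.erase k) (Finset.erase_ssubset hkS)
                    refine ⟨_, hmaj b1 hb1R b2 hb2R b3 hb3R, fun m hm => ?_⟩
                    by_cases hmi : m = i
                    · have h2 := hb2 m (Finset.mem_erase.mpr ⟨by rw [hmi]; exact hji.symm, hm⟩)
                      have h3 := hb3 m (Finset.mem_erase.mpr ⟨by rw [hmi]; exact hki.symm, hm⟩)
                      show maj (b1 m) (b2 m) (b3 m) = a m
                      rw [h2, h3, maj_vxx]
                    · by_cases hmj : m = j
                      · have h1 := hb1 m (Finset.mem_erase.mpr ⟨hmi, hm⟩)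
                        have h3 := hb3 m (Finset.mem_erase.mpr ⟨by rw [hmj]; exact hkj.symm, hm⟩)
                        show maj (b1 m) (b2 m) (b3 m) = a m
                        rw [h1, h3, maj_xvx]
                      · have h1 := hb1 m (Finset.mem_erase.mpr ⟨hmi, hm⟩)
                        have h2 := hb2 m (Finset.mem_erase.mpr ⟨hmj, hm⟩)
                        show maj (b1 m) (b2 m) (b3 m) = a m
                        rw [h1, h2, maj_xxv]
          obtain ⟨b, hbR, hb⟩ := key Finset.univ
          have : b = a := funext fun i => hb i (Finset.mem_univ i)
          rwa [← this]
        · exfalso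
          have hval : ∀ b ∈ R, SatClause b ([] : List (Fin n × Bool)) := by
            intro b hbR; exact absurd ⟨b, hbR⟩ hne
          have hmem : ([] : List (Fin n × Bool)) ∈ φ :=
            List.mem_filter.mpr ⟨nil_mem_cands, decide_eq_true hval⟩
          obtain ⟨l, hl, -⟩ := ha _ hmem
          simp at hl
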